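/- If a bridgeless graph G admits an oriented 3-cycle double cover (a collection of 3 directed cycles such that every edge lies in exactly two of them with opposite directions), then G admits a 2-dimensional nowhere-zero 2-flow, i.e. an orientation together with an assignment φ : E(G) → ℝ² satisfying Kirchhoff's law at every vertex such that the Euclidean norm of φ(e) equals 1 for every edge e. -/

import Mathlib

open scoped BigOperators

noncomputable section

/-- The vector `(x, y)` in the Euclidean plane `ℝ²`. -/
def vec2 (x y : ℝ) : EuclideanSpace ℝ (Fin 2) := (WithLp.equiv 2 (Fin 2 → ℝ)).symm ![x, y]

/-- `f` is a `d`-dimensional nowhere-zero `r`-flow ((r,d)-NZF) on the graph `G`.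
We encode an orientation together with a flow as a skew-symmetric function on ordered
pairs of vertices, supported on adjacent pairs, whose values (on edges) have Euclidean
norm in `[1, r-1]`, and which satisfies Kirchhoff's law at every vertex. -/
def IsNZF {V : Type} [Fintype V] (G : SimpleGraph V) (d : ℕ) (r : ℝ)
    (f : V → V → EuclideanSpace ℝ (Fin d)) : Prop :=
  (∀ u v, f u v = - f v u) ∧
  (∀ u v, ¬ G.Adj u v → f u v = 0) ∧
  (∀ u v, G.Adj u v → 1 ≤ ‖f u v‖ ∧ ‖f u v‖ ≤ r - 1) ∧
  (∀ v, ∑ u, f v u = 0)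

/-- `G` admits an `(r,d)`-NZF. -/
def HasNZF {V : Type} [Fintype V] (G : SimpleGraph V) (d : ℕ) (r : ℝ) : Prop :=
  ∃ f, IsNZF G d r f

/-- A graph is bridgeless if none of its edges is a bridge. -/
def Bridgeless {V : Type} (G : SimpleGraph V) : Prop :=
  ∀ e ∈ G.edgeSet, ¬ G.IsBridge e

/-- A directed cycle of (an orientation of) `G`, encoded by its signed characteristic
function: `g u v = 1` if the cycle contains the dart `u → v`, `g u v = -1` if it contains
`v → u`, and `0` otherwise. Every vertex has equal indegree and outdegree, i.e. Kirchhoff's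
law holds. -/
def IsDirCycle {V : Type} [Fintype V] (G : SimpleGraph V) (g : V → V → ℤ) : Prop :=
  (∀ u v, g u v = - g v u) ∧
  (∀ u v, ¬ G.Adj u v → g u v = 0) ∧
  (∀ u v, g u v = 0 ∨ g u v = 1 ∨ g u v = -1) ∧
  (∀ v, ∑ u, g v u = 0)

/-- An oriented `k`-cycle double cover of `G`: `k` directed cycles such that every edge of
`G` lies in exactly two of them, with opposite directions. -/
def IsOCDC {V : Type} [Fintype V] (G : SimpleGraph V) (k : ℕ) (g : Fin k → V → V → ℤ) : Prop :=
  (∀ i, IsDirCycle G (g i)) ∧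
  (∀ u v, G.Adj u v → ∃ i j, i ≠ j ∧ g i u v = 1 ∧ g j u v = -1 ∧
    ∀ l, l ≠ i → l ≠ j → g l u v = 0)


/-- Vertices of a unit equilateral triangle. -/
def triW : Fin 3 → EuclideanSpace ℝ (Fin 2) :=
  ![vec2 0 0, vec2 1 0, vec2 (1/2) (Real.sqrt 3 / 2)]

lemma triW_dist : ∀ i j : Fin 3, i ≠ j → ‖triW i - triW j‖ = 1 := by
  have h3 : Real.sqrt 3 / 2 * (Real.sqrt 3 / 2) = 3 / 4 := by
    rw [div_mul_div_comm, Real.mul_self_sqrt (by norm_num)]; norm_num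
  intro i j hij
  fin_cases i <;> fin_cases j <;> simp_all <;>
    · rw [EuclideanSpace.norm_eq]
      simp only [triW, vec2, Fin.sum_univ_two, Matrix.cons_val_zero, Matrix.cons_val_one,
        Matrix.head_cons, Matrix.cons_val_two, Matrix.tail_cons, WithLp.equiv_symm_apply,
        WithLp.ofLp_sub, WithLp.ofLp_toLp, Matrix.sub_apply, Real.norm_eq_abs, sq_abs,
        Pi.sub_apply]
      rw [Real.sqrt_eq_one]
      nlinarith [h3]

/-- If a bridgeless graph admits an oriented 3-cycle double cover, then it admits a
2-dimensional nowhere-zero 2-flow: every flow value is a unit vector of `ℝ²`. -/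
theorem stmt_0 {V : Type} [Fintype V] (G : SimpleGraph V) (hG : Bridgeless G)
    (g : Fin 3 → V → V → ℤ) (hg : IsOCDC G 3 g) :
    ∃ f : V → V → EuclideanSpace ℝ (Fin 2),
      IsNZF G 2 2 f ∧ ∀ u v, G.Adj u v → ‖f u v‖ = 1 := by
  obtain ⟨hcyc, hcov⟩ := hg
  refine ⟨fun u v => ∑ i, (g i u v : ℝ) • triW i, ⟨?_, ?_, ?_, ?_⟩, ?_⟩
  · intro u v
    rw [← Finset.sum_neg_distrib]
    refine Finset.sum_congr rfl fun i _ => ?_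
    rw [(hcyc i).1 u v]; push_cast; rw [neg_smul]
  · intro u v h
    refine Finset.sum_eq_zero fun i _ => ?_
    rw [(hcyc i).2.1 u v h]; simp
  · intro u v h
    obtain ⟨i, j, hij, hi, hj, ho⟩ := hcov u v h
    have : ∑ k, (g k u v : ℝ) • triW k = triW i - triW j := by
      rw [← Finset.sum_subset (Finset.subset_univ {i, j})]
      · rw [Finset.sum_pair hij, hi, hj]; push_cast; simp [sub_eq_add_neg]
      · intro l _ hl
        simp only [Finset.mem_insert, Finset.mem_singleton, not_or] at hl
        rw [ho l hl.1 hl.2]; simp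
    simp only [this, triW_dist i j hij]; norm_num
  · intro v
    rw [Finset.sum_comm]
    refine Finset.sum_eq_zero fun i _ => ?_
    rw [← Finset.sum_smul]
    have : ∑ u, ((g i v u : ℝ)) = ((∑ u, g i v u : ℤ) : ℝ) := by push_cast; rfl
    rw [this, (hcyc i).2.2.2 v]; simp
  · intro u v h
    obtain ⟨i, j, hij, hi, hj, ho⟩ := hcov u v h
    have : ∑ k, (g k u v : ℝ) • triW k = triW i - triW j := by
      rw [← Finset.sum_subset (Finset.subset_univ {i, j})]
      · rw [Finset.sum_pair hij, hi, hj]; push_cast; simp [sub_eq_add_neg]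
      · intro l _ hl
        simp only [Finset.mem_insert, Finset.mem_singleton, not_or] at hl
        rw [ho l hl.1 hl.2]; simp
    simp only [this, triW_dist i j hij]
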